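/- For every m ≥ 2 and every ranking pattern σ over [m] (strict or weak), there exists a voting situation N on m candidates that is q-concordant with σ. -/

import Mathlib

open Finset

/-- Number of votes obtained by candidate `i` in an election with candidate set `A`,
under the voting situation `N` (number of voters per preference permutation). -/
def votes (m : ℕ) (N : Equiv.Perm (Fin m) → ℕ) (A : Finset (Fin m)) (i : Fin m) : ℕ :=
  ∑ π : Equiv.Perm (Fin m),
    N π * (if ∀ j ∈ A, j ≠ i → π.symm i < π.symm j then 1 else 0)

/-- `σ` is a ranking function on the finite set `A`:
each value equals one plus the number of strictly preceding elements of `A`. -/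
def IsRankingFunction (m : ℕ) (A : Finset (Fin m)) (σ : Fin m → ℕ) : Prop :=
  ∀ i ∈ A, σ i = 1 + (A.filter (fun j => σ j < σ i)).card

/-- A ranking pattern over `[m]`: a ranking function for each subset of size at least 2. -/
def IsRankingPattern (m : ℕ) (σ : Finset (Fin m) → Fin m → ℕ) : Prop :=
  ∀ A : Finset (Fin m), 2 ≤ A.card → IsRankingFunction m A (σ A)

/-- A ranking pattern is strict when each of its ranking functions is injective on its set. -/
def IsStrictRankingPattern (m : ℕ) (σ : Finset (Fin m) → Fin m → ℕ) : Prop :=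
  IsRankingPattern m σ ∧ ∀ A : Finset (Fin m), 2 ≤ A.card → Set.InjOn (σ A) ↑A

/-- A voting situation `N` is q-concordant with the ranking pattern `σ`. -/
def QConcordant (m : ℕ) (N : Equiv.Perm (Fin m) → ℕ)
    (σ : Finset (Fin m) → Fin m → ℕ) : Prop :=
  ∀ A : Finset (Fin m), 2 ≤ A.card → ∀ i ∈ A, ∀ j ∈ A, i ≠ j →
    (σ A i < σ A j ↔ votes m N A j < votes m N A i) ∧
    (σ A i = σ A j ↔ votes m N A i = votes m N A j)

namespace Stmt7Aux

variable {m : ℕ}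


variable {m : ℕ}

/-- `i` is top-ranked within `A` under preference `π`. -/
def Ptop (A : Finset (Fin m)) (i : Fin m) (π : Equiv.Perm (Fin m)) : Prop :=
  ∀ j ∈ A, j ≠ i → π.symm i < π.symm j

instance (A : Finset (Fin m)) (i : Fin m) (π : Equiv.Perm (Fin m)) : Decidable (Ptop A i π) := by
  unfold Ptop; infer_instance

/-- Block of permutations: complement of C occupies the first positions, then k. -/
def QF (C : Finset (Fin m)) (k : Fin m) : Finset (Equiv.Perm (Fin m)) :=
  univ.filter fun π => (∀ x ∈ Cᶜ, (π.symm x : ℕ) < Cᶜ.card) ∧ ((π.symm k : ℕ) = Cᶜ.card)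

lemma mem_QF {C : Finset (Fin m)} {k : Fin m} {π : Equiv.Perm (Fin m)} :
    π ∈ QF C k ↔ (∀ x ∈ Cᶜ, (π.symm x : ℕ) < Cᶜ.card) ∧ ((π.symm k : ℕ) = Cᶜ.card) := by
  simp [QF]

/-- In a block permutation, every member of C sits at position ≥ |Cᶜ|. -/
lemma pos_ge {C : Finset (Fin m)} {k i : Fin m} {π : Equiv.Perm (Fin m)}
    (hπ : π ∈ QF C k) (hi : i ∈ C) : Cᶜ.card ≤ (π.symm i : ℕ) := by
  by_contra h
  push_neg at h
  set p := Cᶜ.card with hp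
  have hp0 : 0 < p := Nat.pos_of_ne_zero (by omega)
  have hsub : (insert i Cᶜ).image π.symm ⊆ univ.filter (fun y : Fin m => (y : ℕ) < p) := by
    intro y hy
    simp only [mem_image, mem_insert] at hy
    obtain ⟨x, hx, rfl⟩ := hy
    rcases hx with rfl | hx
    · simp [h]
    · simp [(mem_QF.mp hπ).1 x hx]
      exact (mem_QF.mp hπ).1 x hx
  have hcard1 : ((insert i Cᶜ).image π.symm).card = p + 1 := by
    rw [Finset.card_image_of_injective _ π.symm.injective,
      Finset.card_insert_of_notMem (by simp [hi])]
  have hcard2 : (univ.filter (fun y : Fin m => (y : ℕ) < p)).card ≤ p := by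
    have hle : (univ.filter (fun y : Fin m => (y : ℕ) < p)).card ≤ (univ : Finset (Fin p)).card := by
      refine Finset.card_le_card_of_injOn
        (fun y => if hy : (y : ℕ) < p then (⟨(y:ℕ), hy⟩ : Fin p) else ⟨0, hp0⟩) (fun a _ => mem_univ _) ?_
      intro a ha b hb hab
      simp only [coe_filter, Set.mem_setOf_eq, mem_univ, true_and] at ha hb
      simp only [dif_pos ha, dif_pos hb, Fin.mk.injEq] at hab
      exact Fin.val_injective hab
    simpa using hle
  have := (Finset.card_le_card hsub).trans hcard2
  omega

lemma not_Ptop_of_inter {C A : Finset (Fin m)} {k i j : Fin m} {π : Equiv.Perm (Fin m)}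
    (hπ : π ∈ QF C k) (hi : i ∈ C) (hjA : j ∈ A) (hjC : j ∈ Cᶜ) : ¬ Ptop A i π := by
  intro hP
  have hji : j ≠ i := by rintro rfl; simp [hi] at hjC
  have h1 := hP j hjA hji
  have h2 := (mem_QF.mp hπ).1 j hjC
  have h3 := pos_ge hπ hi
  rw [Fin.lt_def] at h1
  omega

/-- For `i ∈ Cᶜ`, being top of A only depends on positions of elements of `Cᶜ`. -/
lemma Ptop_char {C A : Finset (Fin m)} {k i : Fin m} {π : Equiv.Perm (Fin m)}
    (hπ : π ∈ QF C k) (hiC : i ∈ Cᶜ) :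
    Ptop A i π ↔ ∀ j ∈ A, j ∈ Cᶜ → j ≠ i → π.symm i < π.symm j := by
  constructor
  · intro hP j hjA _ hji; exact hP j hjA hji
  · intro h j hjA hji
    by_cases hjC : j ∈ Cᶜ
    · exact h j hjA hjC hji
    · rw [Fin.lt_def]
      have h1 := (mem_QF.mp hπ).1 i hiC
      have h2 := pos_ge hπ (by simpa using hjC)
      omega

/-- If `A ⊆ C` and `k ∈ A`, then `k` is the unique top element of `A` in the block. -/
lemma Ptop_iff_eq {C A : Finset (Fin m)} {k i : Fin m} {π : Equiv.Perm (Fin m)}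
    (hπ : π ∈ QF C k) (hAC : A ⊆ C) (hk : k ∈ A) (hi : i ∈ A) :
    Ptop A i π ↔ i = k := by
  obtain ⟨h1, h2⟩ := mem_QF.mp hπ
  constructor
  · intro hP
    by_contra hik
    have := hP k hk (Ne.symm hik)
    rw [Fin.lt_def] at this
    have := pos_ge hπ (hAC hi)
    omega
  · rintro rfl
    intro j hjA hji
    rw [Fin.lt_def]
    have h3 := pos_ge hπ (hAC hjA)
    have h4 : π.symm j ≠ π.symm i := fun h => hji (π.symm.injective h)
    have h5 : (π.symm j : ℕ) ≠ (π.symm i : ℕ) := fun h => h4 (Fin.val_injective h)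
    omega

lemma symm_mul (s π : Equiv.Perm (Fin m)) (x : Fin m) : (s * π).symm x = π.symm (s.symm x) := rfl

/-- Generic swap-bijection principle for counting permutations. -/
lemma card_filter_eq_of_mul (s : Equiv.Perm (Fin m)) (hs : s * s = 1)
    (P Q : Equiv.Perm (Fin m) → Prop) [DecidablePred P] [DecidablePred Q]
    (h : ∀ π, P π ↔ Q (s * π)) :
    (univ.filter P).card = (univ.filter Q).card := by
  have hinv : ∀ π : Equiv.Perm (Fin m), s * (s * π) = π := by
    intro π; rw [← mul_assoc, hs, one_mul]
  refine Finset.card_bij' (fun π _ => s * π) (fun π _ => s * π) ?_ ?_ ?_ ?_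
  · intro π hπ
    simp only [mem_filter, mem_univ, true_and] at hπ ⊢
    exact (h π).mp hπ
  · intro π hπ
    simp only [mem_filter, mem_univ, true_and] at hπ ⊢
    have := (h (s * π)).mpr
    rw [hinv] at this
    exact this hπ
  · intro π _; exact hinv π
  · intro π _; exact hinv π

lemma swap_mem_QF {C : Finset (Fin m)} {a b k : Fin m} (ha : a ∈ C) (hb : b ∈ C)
    (π : Equiv.Perm (Fin m)) :
    Equiv.swap a b * π ∈ QF C k ↔ π ∈ QF C (Equiv.swap a b k) := by
  rw [mem_QF, mem_QF]
  have hfix : ∀ x ∈ Cᶜ, (Equiv.swap a b * π).symm x = π.symm x := by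
    intro x hx
    rw [symm_mul, Equiv.symm_swap, Equiv.swap_apply_of_ne_of_ne]
    · rintro rfl; simp [ha] at hx
    · rintro rfl; simp [hb] at hx
  constructor
  · rintro ⟨h1, h2⟩
    refine ⟨fun x hx => by rw [← hfix x hx]; exact h1 x hx, ?_⟩
    rw [symm_mul, Equiv.symm_swap] at h2; exact h2
  · rintro ⟨h1, h2⟩
    refine ⟨fun x hx => by rw [hfix x hx]; exact h1 x hx, ?_⟩
    rw [symm_mul, Equiv.symm_swap]; exact h2

lemma swap_Ptop {A : Finset (Fin m)} {a b : Fin m} (ha : a ∈ A) (hb : b ∈ A)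
    (i : Fin m) (π : Equiv.Perm (Fin m)) :
    Ptop A i (Equiv.swap a b * π) ↔ Ptop A (Equiv.swap a b i) π := by
  have hsA : ∀ x ∈ A, Equiv.swap a b x ∈ A := by
    intro x hx
    rcases eq_or_ne x a with rfl | hxa
    · rwa [Equiv.swap_apply_left]
    rcases eq_or_ne x b with rfl | hxb
    · rwa [Equiv.swap_apply_right]
    · rwa [Equiv.swap_apply_of_ne_of_ne hxa hxb]
  unfold Ptop
  simp only [symm_mul, Equiv.symm_swap]
  constructor
  · intro h j hj hji
    have := h (Equiv.swap a b j) (hsA j hj)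
      (fun hc => hji (by rw [← Equiv.swap_apply_self a b j, hc]))
    rwa [Equiv.swap_apply_self] at this
  · intro h j hj hji
    exact h (Equiv.swap a b j) (hsA j hj)
      (fun hc => hji ((Equiv.swap a b).injective hc))

/-- (I1) the block size does not depend on `k`. -/
lemma card_QF_eq {C : Finset (Fin m)} {k k' : Fin m} (hk : k ∈ C) (hk' : k' ∈ C) :
    (QF C k).card = (QF C k').card := by
  have : QF C k = univ.filter (fun π => π ∈ QF C k) := by
    ext π; simp
  rw [this]
  have : QF C k' = univ.filter (fun π => π ∈ QF C k') := by
    ext π; simp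
  rw [this]
  refine card_filter_eq_of_mul (Equiv.swap k' k) (Equiv.swap_mul_self _ _) _ _ ?_
  intro π
  rw [swap_mem_QF hk' hk, Equiv.swap_apply_left]

def vN (C : Finset (Fin m)) (k : Fin m) (A : Finset (Fin m)) (i : Fin m) : ℕ :=
  ((QF C k).filter (fun π => Ptop A i π)).card

def T (A : Finset (Fin m)) (i : Fin m) : ℕ := (univ.filter (fun π => Ptop A i π)).card

lemma T_eq {A : Finset (Fin m)} {i j : Fin m} (hi : i ∈ A) (hj : j ∈ A) :
    T A i = T A j := by
  unfold T
  refine card_filter_eq_of_mul (Equiv.swap i j) (Equiv.swap_mul_self _ _) _ _ ?_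
  intro π
  rw [swap_Ptop hi hj, Equiv.swap_apply_right]

lemma vN_eq_filter (C : Finset (Fin m)) (k : Fin m) (A : Finset (Fin m)) (i : Fin m) :
    vN C k A i = (univ.filter (fun π => π ∈ QF C k ∧ Ptop A i π)).card := by
  unfold vN
  congr 1
  ext π
  simp [mem_filter]

/-- (I2) -/
lemma vN_eq_of_not_subset {C A : Finset (Fin m)} {k k' i : Fin m} (hnAC : ¬ A ⊆ C)
    (hk : k ∈ C) (hk' : k' ∈ C) (hi : i ∈ A) : vN C k A i = vN C k' A i := by
  obtain ⟨j0, hj0A, hj0C⟩ := Finset.not_subset.mp hnAC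
  rw [← Finset.mem_compl] at hj0C
  by_cases hiC : i ∈ C
  · unfold vN
    rw [Finset.filter_eq_empty_iff.mpr (fun π hπ => not_Ptop_of_inter hπ hiC hj0A hj0C),
      Finset.filter_eq_empty_iff.mpr (fun π hπ => not_Ptop_of_inter hπ hiC hj0A hj0C)]
  · rw [← Finset.mem_compl] at hiC
    rw [vN_eq_filter, vN_eq_filter]
    refine card_filter_eq_of_mul (Equiv.swap k' k) (Equiv.swap_mul_self _ _) _ _ ?_
    intro π
    have hmem : Equiv.swap k' k * π ∈ QF C k' ↔ π ∈ QF C k := by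
      rw [swap_mem_QF hk' hk, Equiv.swap_apply_left]
    have hfix : ∀ x ∈ Cᶜ, (Equiv.swap k' k * π).symm x = π.symm x := by
      intro x hx
      rw [symm_mul, Equiv.symm_swap, Equiv.swap_apply_of_ne_of_ne]
      · rintro rfl; simp [hk'] at hx
      · rintro rfl; simp [hk] at hx
    constructor
    · rintro ⟨h1, h2⟩
      refine ⟨hmem.mpr h1, ?_⟩
      rw [Ptop_char (hmem.mpr h1) hiC]
      intro j hjA hjC hji
      rw [hfix i hiC, hfix j hjC]
      exact (Ptop_char h1 hiC).mp h2 j hjA hjC hji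
    · rintro ⟨h1, h2⟩
      refine ⟨hmem.mp h1, ?_⟩
      rw [Ptop_char (hmem.mp h1) hiC]
      intro j hjA hjC hji
      rw [← hfix i hiC, ← hfix j hjC]
      exact (Ptop_char h1 hiC).mp h2 j hjA hjC hji

/-- (I3) -/
lemma vN_eq_of_subset_notmem {C A : Finset (Fin m)} {k i j : Fin m} (hAC : A ⊆ C)
    (hkA : k ∉ A) (hi : i ∈ A) (hj : j ∈ A) : vN C k A i = vN C k A j := by
  rw [vN_eq_filter, vN_eq_filter]
  refine card_filter_eq_of_mul (Equiv.swap i j) (Equiv.swap_mul_self _ _) _ _ ?_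
  intro π
  have hmem : Equiv.swap i j * π ∈ QF C k ↔ π ∈ QF C k := by
    have hki : k ≠ i := fun h => hkA (h ▸ hi)
    have hkj : k ≠ j := fun h => hkA (h ▸ hj)
    rw [swap_mem_QF (hAC hi) (hAC hj), Equiv.swap_apply_of_ne_of_ne hki hkj]
  have hev : Ptop A j (Equiv.swap i j * π) ↔ Ptop A i π := by
    rw [swap_Ptop hi hj, Equiv.swap_apply_right]
  constructor
  · rintro ⟨h1, h2⟩; exact ⟨hmem.mpr h1, hev.mpr h2⟩
  · rintro ⟨h1, h2⟩; exact ⟨hmem.mp h1, hev.mp h2⟩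

/-- (I4) -/
lemma vN_of_subset_mem {C A : Finset (Fin m)} {k i : Fin m} (hAC : A ⊆ C)
    (hkA : k ∈ A) (hi : i ∈ A) :
    vN C k A i = if i = k then (QF C k).card else 0 := by
  unfold vN
  split_ifs with h
  · subst h
    rw [Finset.filter_true_of_mem (fun π hπ => (Ptop_iff_eq hπ hAC hkA hi).mpr rfl)]
  · rw [Finset.card_eq_zero, Finset.filter_eq_empty_iff]
    intro π hπ
    rw [Ptop_iff_eq hπ hAC hkA hi]
    exact h

/-- (I5) nonemptiness of the blocks. -/
lemma QF_nonempty {C : Finset (Fin m)} {k : Fin m} (hk : k ∈ C) : (QF C k).Nonempty := by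
  classical
  set p := Cᶜ.card with hp
  have hpm : p < m := by
    have hne : Cᶜ ≠ univ := by
      intro h
      have : k ∈ Cᶜ := h ▸ mem_univ k
      simp [hk] at this
    have := Finset.card_lt_card (ssubset_univ_iff.mpr hne)
    simpa using this
  have e2 : {y : Fin m // (y : ℕ) < p} ≃ Fin p :=
    { toFun := fun y => ⟨y.1, y.2⟩
      invFun := fun i => ⟨⟨i.1, lt_trans i.2 hpm⟩, i.2⟩
      left_inv := fun y => by ext; rfl
      right_inv := fun i => by ext; rfl }
  have hc : Fintype.card {x : Fin m // x ∈ Cᶜ} = Fintype.card {y : Fin m // (y : ℕ) < p} := by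
    rw [Fintype.card_coe, Fintype.card_congr e2, Fintype.card_fin]
  let e := Fintype.equivOfCardEq hc
  let π₁ := e.extendSubtype
  have h1 : ∀ x ∈ Cᶜ, ((π₁ x) : ℕ) < p := fun x hx => e.extendSubtype_mem x hx
  have h2 : ¬ ((π₁ k : ℕ) < p) := e.extendSubtype_not_mem k (by simp [hk])
  let p' : Fin m := ⟨p, hpm⟩
  let τ := Equiv.swap (π₁ k) p'
  refine ⟨(π₁.trans τ).symm, ?_⟩
  rw [mem_QF]
  simp only [Equiv.symm_symm, Equiv.trans_apply]
  constructor
  · intro x hx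
    have hx1 : π₁ x ≠ π₁ k := fun h =>
      (by simp [hk] at hx ⊢; exact hx (π₁.injective h ▸ hk) : False)
    have hx2 : π₁ x ≠ p' := by
      intro h
      have := h1 x hx
      rw [h] at this
      simp [p'] at this
    rw [show τ (π₁ x) = π₁ x from Equiv.swap_apply_of_ne_of_ne hx1 hx2]
    exact h1 x hx
  · rw [show τ (π₁ k) = p' from Equiv.swap_apply_left _ _]

noncomputable def qh (C : Finset (Fin m)) : ℕ :=
  if h : C.Nonempty then (QF C (C.min' h)).card else 0

lemma qh_eq {C : Finset (Fin m)} {k : Fin m} (hk : k ∈ C) : (QF C k).card = qh C := by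
  have hne : C.Nonempty := ⟨k, hk⟩
  rw [qh, dif_pos hne]
  exact card_QF_eq hk (C.min'_mem hne)

lemma qh_pos {C : Finset (Fin m)} (h : C.Nonempty) : 0 < qh C := by
  rw [qh, dif_pos h]
  exact Finset.card_pos.mpr (QF_nonempty (C.min'_mem h))

noncomputable def coef (σ : Finset (Fin m) → Fin m → ℕ) : Finset (Fin m) → Fin m → ℚ
  | A => fun i =>
    let t : Fin m → ℚ := fun x => (∑ k ∈ A, (σ A k : ℚ)) / A.card - (σ A x : ℚ)
    let r : Fin m → ℚ := fun x =>
      ∑ C ∈ (univ.filter fun C => A ⊂ C).attach, (qh C.1 : ℚ) * coef σ C.1 x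
    (t i - (r i - (∑ k ∈ A, r k) / A.card)) / qh A
  termination_by A => Aᶜ.card
  decreasing_by
    have hAC : A ⊂ C.1 := by have h := C.2; simp only [mem_filter, mem_univ, true_and] at h; exact h
    have : C.1ᶜ ⊂ Aᶜ := by rwa [Finset.compl_ssubset_compl]
    exact Finset.card_lt_card this

noncomputable def rfun (σ : Finset (Fin m) → Fin m → ℕ) (A : Finset (Fin m)) (x : Fin m) : ℚ :=
  ∑ C ∈ univ.filter fun C => A ⊂ C, (qh C : ℚ) * coef σ C x

lemma coef_eq (σ : Finset (Fin m) → Fin m → ℕ) (A : Finset (Fin m)) (i : Fin m) :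
    coef σ A i = ((∑ k ∈ A, (σ A k : ℚ)) / A.card - (σ A i : ℚ)
      - (rfun σ A i - (∑ k ∈ A, rfun σ A k) / A.card)) / qh A := by
  rw [coef]
  simp only [rfun]
  rw [Finset.sum_attach (filter (fun C => A ⊂ C) univ) (fun C => (qh C : ℚ) * coef σ C i)]
  have hin : ∀ x : Fin m,
      (∑ C ∈ (filter (fun C => A ⊂ C) univ).attach, (qh C.1 : ℚ) * coef σ C.1 x)
        = ∑ C ∈ filter (fun C => A ⊂ C) univ, (qh C : ℚ) * coef σ C x := fun x =>
    Finset.sum_attach (filter (fun C => A ⊂ C) univ) (fun C => (qh C : ℚ) * coef σ C x)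
  simp only [hin]

lemma coef_sum_zero (σ : Finset (Fin m) → Fin m → ℕ) (A : Finset (Fin m)) :
    ∑ k ∈ A, coef σ A k = 0 := by
  rcases A.eq_empty_or_nonempty with rfl | hne
  · simp
  have hcard : ((A.card : ℚ)) ≠ 0 := by
    exact_mod_cast Finset.card_ne_zero_of_mem hne.choose_spec
  have : ∀ k ∈ A, coef σ A k = ((∑ l ∈ A, (σ A l : ℚ)) / A.card - (σ A k : ℚ)
      - (rfun σ A k - (∑ l ∈ A, rfun σ A l) / A.card)) / qh A := fun k _ => coef_eq σ A k
  rw [Finset.sum_congr rfl this, ← Finset.sum_div]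
  rw [show (∑ k ∈ A, ((∑ l ∈ A, (σ A l : ℚ)) / A.card - (σ A k : ℚ)
      - (rfun σ A k - (∑ l ∈ A, rfun σ A l) / A.card))) = 0 by
    rw [Finset.sum_sub_distrib, Finset.sum_sub_distrib, Finset.sum_sub_distrib]
    rw [Finset.sum_const, Finset.sum_const, nsmul_eq_mul, nsmul_eq_mul]
    field_simp
    simp]
  simp

lemma coef_identity (σ : Finset (Fin m) → Fin m → ℕ) {A : Finset (Fin m)}
    (hA2 : 2 ≤ A.card) (i j : Fin m) :
    ∑ C ∈ univ.filter (fun C => A ⊆ C), (qh C : ℚ) * (coef σ C i - coef σ C j)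
      = (σ A j : ℚ) - (σ A i : ℚ) := by
  have hne : A.Nonempty := Finset.card_pos.mp (by omega)
  have hq : ((qh A : ℚ)) ≠ 0 := by exact_mod_cast (qh_pos hne).ne'
  have hsplit : (univ.filter (fun C => A ⊆ C) : Finset (Finset (Fin m)))
      = insert A (univ.filter (fun C => A ⊂ C)) := by
    ext C
    simp only [mem_filter, mem_univ, true_and, mem_insert]
    constructor
    · intro h
      rcases lt_or_eq_of_le h with h' | h'
      · exact Or.inr h'
      · exact Or.inl h'.symm
    · rintro (rfl | h)
      · exact Finset.Subset.refl _
      · exact h.subset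
  have hA_not : A ∉ univ.filter (fun C => A ⊂ C) := by
    simp only [mem_filter, mem_univ, true_and]
    exact fun h => h.ne rfl
  rw [hsplit, Finset.sum_insert hA_not]
  have hr : ∑ C ∈ univ.filter (fun C => A ⊂ C), (qh C : ℚ) * (coef σ C i - coef σ C j)
      = rfun σ A i - rfun σ A j := by
    rw [rfun, rfun, ← Finset.sum_sub_distrib]
    apply Finset.sum_congr rfl
    intro C _
    ring
  rw [hr, coef_eq σ A i, coef_eq σ A j]
  have hcard : ((A.card : ℚ)) ≠ 0 := by
    have := hne.card_pos
    exact_mod_cast this.ne'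
  field_simp
  ring

/-- The collection of subsets of size at least 2. -/
def SC (m : ℕ) : Finset (Finset (Fin m)) := univ.filter (fun C => 2 ≤ C.card)

noncomputable def Dden (σ : Finset (Fin m) → Fin m → ℕ) : ℕ :=
  ∏ C ∈ SC m, ∏ k ∈ C, (coef σ C k).den

lemma Dden_pos (σ : Finset (Fin m) → Fin m → ℕ) : 0 < Dden σ :=
  Finset.prod_pos fun C _ => Finset.prod_pos fun k _ => (coef σ C k).pos

noncomputable def zc (σ : Finset (Fin m) → Fin m → ℕ) (C : Finset (Fin m)) (k : Fin m) : ℤ :=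
  (coef σ C k).num * ((Dden σ / (coef σ C k).den : ℕ) : ℤ)

lemma zc_cast (σ : Finset (Fin m) → Fin m → ℕ) {C : Finset (Fin m)} {k : Fin m}
    (hC : C ∈ SC m) (hk : k ∈ C) :
    ((zc σ C k : ℚ)) = (Dden σ : ℚ) * coef σ C k := by
  have hdvd : (coef σ C k).den ∣ Dden σ :=
    dvd_trans (Finset.dvd_prod_of_mem (fun k => (coef σ C k).den) hk)
      (Finset.dvd_prod_of_mem (fun C => ∏ k ∈ C, (coef σ C k).den) hC)
  obtain ⟨t, ht⟩ := hdvd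
  have hden : (coef σ C k).den ≠ 0 := (coef σ C k).den_nz
  have hdiv : Dden σ / (coef σ C k).den = t := by
    rw [ht]; exact Nat.mul_div_cancel_left t (Nat.pos_of_ne_zero hden)
  have hmul : ((coef σ C k).den : ℚ) * coef σ C k = (coef σ C k).num := by
    rw [mul_comm]; exact_mod_cast Rat.mul_den_eq_num (coef σ C k)
  rw [zc, hdiv, ht]
  push_cast
  rw [mul_assoc, mul_comm (t:ℚ), ← mul_assoc, hmul]

lemma zc_sum_zero (σ : Finset (Fin m) → Fin m → ℕ) {C : Finset (Fin m)} (hC : C ∈ SC m) :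
    ∑ k ∈ C, zc σ C k = 0 := by
  have h : ((∑ k ∈ C, zc σ C k : ℤ) : ℚ) = 0 := by
    push_cast
    rw [Finset.sum_congr rfl (fun k hk => zc_cast σ hC hk), ← Finset.mul_sum,
      coef_sum_zero, mul_zero]
  exact_mod_cast h

noncomputable def SInt (σ : Finset (Fin m) → Fin m → ℕ) (π : Equiv.Perm (Fin m)) : ℤ :=
  ∑ C ∈ SC m, ∑ k ∈ C, zc σ C k * (if π ∈ QF C k then 1 else 0)

noncomputable def Mc (σ : Finset (Fin m) → Fin m → ℕ) : ℤ :=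
  ∑ C ∈ SC m, ∑ k ∈ C, |zc σ C k|

lemma SInt_abs_le (σ : Finset (Fin m) → Fin m → ℕ) (π : Equiv.Perm (Fin m)) :
    |SInt σ π| ≤ Mc σ := by
  refine le_trans (Finset.abs_sum_le_sum_abs _ _) (Finset.sum_le_sum fun C _ => ?_)
  refine le_trans (Finset.abs_sum_le_sum_abs _ _) (Finset.sum_le_sum fun k _ => ?_)
  rw [abs_mul]
  have : |(if π ∈ QF C k then (1:ℤ) else 0)| ≤ 1 := by split_ifs <;> simp
  calc |zc σ C k| * |(if π ∈ QF C k then (1:ℤ) else 0)| ≤ |zc σ C k| * 1 :=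
        mul_le_mul_of_nonneg_left this (abs_nonneg _)
    _ = |zc σ C k| := mul_one _

noncomputable def NN (σ : Finset (Fin m) → Fin m → ℕ) (π : Equiv.Perm (Fin m)) : ℕ :=
  (Mc σ + SInt σ π).toNat

lemma NN_cast (σ : Finset (Fin m) → Fin m → ℕ) (π : Equiv.Perm (Fin m)) :
    ((NN σ π : ℤ)) = Mc σ + SInt σ π := by
  have h := abs_le.mp (SInt_abs_le σ π)
  exact Int.toNat_of_nonneg (by linarith [h.1])

lemma ite_mul_ite (a b : Prop) [Decidable a] [Decidable b] :
    ((if a then (1:ℤ) else 0) * (if b then 1 else 0)) = if a ∧ b then 1 else 0 := by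
  split_ifs <;> simp_all

lemma votes_cast (σ : Finset (Fin m) → Fin m → ℕ) (A : Finset (Fin m)) (i : Fin m) :
    ((votes m (NN σ) A i : ℤ)) =
      Mc σ * T A i + ∑ C ∈ SC m, ∑ k ∈ C, zc σ C k * (vN C k A i : ℤ) := by
  have h1 : ((votes m (NN σ) A i : ℤ))
      = ∑ π : Equiv.Perm (Fin m), (NN σ π : ℤ) * (if Ptop A i π then 1 else 0) := by
    rw [votes]
    push_cast
    apply Finset.sum_congr rfl
    intro π _
    rfl
  rw [h1]
  have h2 : ∀ π : Equiv.Perm (Fin m), (NN σ π : ℤ) * (if Ptop A i π then 1 else 0)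
      = Mc σ * (if Ptop A i π then 1 else 0)
        + ∑ C ∈ SC m, ∑ k ∈ C, zc σ C k * (if π ∈ QF C k ∧ Ptop A i π then 1 else 0) := by
    intro π
    rw [NN_cast, add_mul, SInt]
    congr 1
    rw [Finset.sum_mul]
    apply Finset.sum_congr rfl
    intro C _
    rw [Finset.sum_mul]
    apply Finset.sum_congr rfl
    intro k _
    rw [mul_assoc, ite_mul_ite]
  rw [Finset.sum_congr rfl (fun π _ => h2 π), Finset.sum_add_distrib]
  congr 1
  · rw [← Finset.mul_sum, Finset.sum_boole]
    rfl
  · rw [Finset.sum_comm]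
    apply Finset.sum_congr rfl
    intro C _
    rw [Finset.sum_comm]
    apply Finset.sum_congr rfl
    intro k _
    rw [← Finset.mul_sum, Finset.sum_boole, vN_eq_filter]

lemma perC_subset (σ : Finset (Fin m) → Fin m → ℕ) {C A : Finset (Fin m)} {i j : Fin m}
    (hAC : A ⊆ C) (hi : i ∈ A) (hj : j ∈ A) (hij : i ≠ j) :
    ∑ k ∈ C, zc σ C k * ((vN C k A i : ℤ) - vN C k A j)
      = (zc σ C i - zc σ C j) * qh C := by
  have key : ∀ k ∈ C, zc σ C k * ((vN C k A i : ℤ) - vN C k A j)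
      = (if k = i then (zc σ C i * qh C : ℤ) else 0)
        + (if k = j then -(zc σ C j * qh C) else 0) := by
    intro k hk
    by_cases hkA : k ∈ A
    · rw [vN_of_subset_mem hAC hkA hi, vN_of_subset_mem hAC hkA hj, qh_eq hk]
      rcases eq_or_ne k i with h | hki
      · rw [h]
        rw [if_pos rfl, if_neg (fun hh : j = i => hij hh.symm), if_pos rfl,
          if_neg (fun hh : i = j => hij hh)]
        push_cast
        ring
      · rcases eq_or_ne k j with h | hkj
        · rw [h]
          rw [if_neg (fun hh : i = j => hij hh), if_pos rfl,
            if_neg (fun hh : j = i => hij hh.symm), if_pos rfl]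
          push_cast
          ring
        · rw [if_neg (fun hh : i = k => hki hh.symm), if_neg (fun hh : j = k => hkj hh.symm),
            if_neg hki, if_neg hkj]
          push_cast
          ring
    · rw [vN_eq_of_subset_notmem hAC hkA hi hj, sub_self, mul_zero,
        if_neg (fun h : k = i => hkA (by rw [h]; exact hi)),
        if_neg (fun h : k = j => hkA (by rw [h]; exact hj)), add_zero]
  rw [Finset.sum_congr rfl key, Finset.sum_add_distrib, Finset.sum_ite_eq' C i,
    Finset.sum_ite_eq' C j, if_pos (hAC hi), if_pos (hAC hj)]
  ring

lemma perC_not_subset (σ : Finset (Fin m) → Fin m → ℕ) {C A : Finset (Fin m)} {i j : Fin m}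
    (hC : C ∈ SC m) (hnAC : ¬ A ⊆ C) (hi : i ∈ A) (hj : j ∈ A) :
    ∑ k ∈ C, zc σ C k * ((vN C k A i : ℤ) - vN C k A j) = 0 := by
  have hCne : C.Nonempty := by
    rw [SC, mem_filter] at hC
    exact Finset.card_pos.mp (by omega)
  set k0 := C.min' hCne with hk0
  have hk0C : k0 ∈ C := C.min'_mem hCne
  have hconst : ∀ k ∈ C, zc σ C k * ((vN C k A i : ℤ) - vN C k A j)
      = zc σ C k * ((vN C k0 A i : ℤ) - vN C k0 A j) := by
    intro k hk
    rw [vN_eq_of_not_subset hnAC hk hk0C hi, vN_eq_of_not_subset hnAC hk hk0C hj]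
  rw [Finset.sum_congr rfl hconst, ← Finset.sum_mul, zc_sum_zero σ hC, zero_mul]

lemma votes_diff (σ : Finset (Fin m) → Fin m → ℕ) {A : Finset (Fin m)} {i j : Fin m}
    (hA2 : 2 ≤ A.card) (hi : i ∈ A) (hj : j ∈ A) (hij : i ≠ j) :
    ((votes m (NN σ) A i : ℚ)) - ((votes m (NN σ) A j : ℚ))
      = (Dden σ : ℚ) * ((σ A j : ℚ) - (σ A i : ℚ)) := by
  have hZ : ((votes m (NN σ) A i : ℤ)) - ((votes m (NN σ) A j : ℤ))
      = ∑ C ∈ (SC m).filter (fun C => A ⊆ C), (zc σ C i - zc σ C j) * (qh C : ℤ) := by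
    rw [votes_cast, votes_cast, T_eq hi hj, add_sub_add_left_eq_sub]
    rw [← Finset.sum_sub_distrib]
    have hsplit : ∀ C ∈ SC m,
        (∑ k ∈ C, zc σ C k * (vN C k A i : ℤ)) - (∑ k ∈ C, zc σ C k * (vN C k A j : ℤ))
          = ∑ k ∈ C, zc σ C k * ((vN C k A i : ℤ) - vN C k A j) := by
      intro C _
      rw [← Finset.sum_sub_distrib]
      apply Finset.sum_congr rfl
      intro k _
      ring
    rw [Finset.sum_congr rfl hsplit]
    rw [Finset.sum_filter]
    apply Finset.sum_congr rfl
    intro C hC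
    by_cases hAC : A ⊆ C
    · rw [if_pos hAC, perC_subset σ hAC hi hj hij]
    · rw [if_neg hAC, perC_not_subset σ hC hAC hi hj]
  have hQ := congrArg (fun x : ℤ => (x : ℚ)) hZ
  push_cast at hQ
  rw [hQ]
  have hfilter : (SC m).filter (fun C => A ⊆ C) = univ.filter (fun C => A ⊆ C) := by
    ext C
    simp only [SC, Finset.filter_filter, mem_filter, mem_univ, true_and]
    exact ⟨fun h => h.2, fun h => ⟨le_trans hA2 (Finset.card_le_card h), h⟩⟩
  rw [hfilter]
  rw [← coef_identity σ hA2 i j, Finset.mul_sum]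
  apply Finset.sum_congr rfl
  intro C hC
  simp only [mem_filter, mem_univ, true_and] at hC
  have hCSC : C ∈ SC m := by
    rw [SC, mem_filter]
    exact ⟨mem_univ _, le_trans hA2 (Finset.card_le_card hC)⟩
  rw [zc_cast σ hCSC (hC hi), zc_cast σ hCSC (hC hj)]
  ring

end Stmt7Aux

theorem stmt7 (m : ℕ) (hm : 2 ≤ m) (σ : Finset (Fin m) → Fin m → ℕ)
    (hσ : IsRankingPattern m σ) :
    ∃ N : Equiv.Perm (Fin m) → ℕ, QConcordant m N σ := by
  classical
  refine ⟨Stmt7Aux.NN σ, ?_⟩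
  intro A hA2 i hi j hj hij
  have hkey := Stmt7Aux.votes_diff σ hA2 hi hj hij
  have hD : (0:ℚ) < Stmt7Aux.Dden σ := by exact_mod_cast Stmt7Aux.Dden_pos σ
  constructor
  · constructor
    · intro h
      have h' : ((σ A i : ℚ)) < ((σ A j : ℚ)) := by exact_mod_cast h
      have : ((votes m (Stmt7Aux.NN σ) A j : ℚ)) < ((votes m (Stmt7Aux.NN σ) A i : ℚ)) := by
        nlinarith
      exact_mod_cast this
    · intro h
      have h' : ((votes m (Stmt7Aux.NN σ) A j : ℚ)) < ((votes m (Stmt7Aux.NN σ) A i : ℚ)) := by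
        exact_mod_cast h
      have : ((σ A i : ℚ)) < ((σ A j : ℚ)) := by nlinarith
      exact_mod_cast this
  · constructor
    · intro h
      have h' : ((σ A i : ℚ)) = ((σ A j : ℚ)) := by exact_mod_cast h
      have : ((votes m (Stmt7Aux.NN σ) A i : ℚ)) = ((votes m (Stmt7Aux.NN σ) A j : ℚ)) := by
        nlinarith
      exact_mod_cast this
    · intro h
      have h' : ((votes m (Stmt7Aux.NN σ) A i : ℚ)) = ((votes m (Stmt7Aux.NN σ) A j : ℚ)) := by
        exact_mod_cast h
      have : ((σ A i : ℚ)) = ((σ A j : ℚ)) := by nlinarith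
      exact_mod_cast this
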